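/- Let V be a vector space with basis e₁,...,e_{n-1} over a field F, e₀ = Σᵢ eᵢ, and X = {0,...,n-1} with |X| = ks. For pairwise disjoint k-element subsets a₁,...,a_j of X, the intersection of the subspaces span{eᵢ : i ∈ X∖a₁}, ..., span{eᵢ : i ∈ X∖a_j} has vector dimension k(s-j) + j - 1 (equivalently projective dimension k(s-j)+j-2). -/

import Mathlib

/-- With `|X| = ks` and the frame `e₀ = Σᵢ eᵢ`, for pairwise disjoint `k`-subsets
`a₁,…,a_j` of `X`, the intersection of the subspaces `span{eᵢ : i ∈ X∖aₗ}` has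
vector dimension `k(s-j) + j - 1`. -/
theorem frame_inf_dim {F V : Type*} [Field F] [AddCommGroup V] [Module F V]
    (k s j n : ℕ) (hk : 0 < k) (hs : 0 < s) (hn : n = k * s) [NeZero n]
    (e : Fin n → V)
    (hli : LinearIndependent F (fun i : {i : Fin n // i ≠ 0} => e i.1))
    (hspan : Submodule.span F (Set.range e) = ⊤)
    (h0 : e 0 = ∑ i ∈ Finset.univ.erase (0 : Fin n), e i)
    (hj : j ≤ s)
    (a : Fin j → Finset (Fin n))
    (hcard : ∀ i, (a i).card = k)
    (hdisj : ∀ i i', i ≠ i' → Disjoint (a i) (a i')) :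
    Module.finrank F ↥(⨅ i : Fin j, Submodule.span F (e '' ↑(a i)ᶜ)) =
      k * (s - j) + j - 1 := by
  classical
  -- the basis
  have hspan' : ⊤ ≤ Submodule.span F
      (Set.range fun i : {i : Fin n // i ≠ 0} => e i.1) := by
    rw [← hspan, Submodule.span_le]
    rintro x ⟨m, rfl⟩
    by_cases hm : m = 0
    · subst hm
      rw [h0]
      exact Submodule.sum_mem _ fun i hi =>
        Submodule.subset_span ⟨⟨i, (Finset.mem_erase.mp hi).1⟩, rfl⟩
    · exact Submodule.subset_span ⟨⟨m, hm⟩, rfl⟩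
  set b : Module.Basis {i : Fin n // i ≠ 0} F V := Module.Basis.mk hli hspan' with hb
  have hbe : ∀ i : {i : Fin n // i ≠ 0}, b i = e i.1 := fun i => Module.Basis.mk_apply hli hspan' i
  haveI : FiniteDimensional F V := Module.Basis.finiteDimensional_of_finite b
  -- coordinate functionals, with index 0 mapped to the zero functional
  set L : Fin n → (V →ₗ[F] F) := fun m => if h : m = 0 then 0 else b.coord ⟨m, h⟩ with hL
  have hLrepr : ∀ (i : {i : Fin n // i ≠ 0}) (v : V), L i.1 v = b.repr v i := by
    rintro ⟨i, hi⟩ v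
    simp [hL, dif_neg hi]
  have hLe : ∀ (m q : Fin n), q ≠ 0 → L m (e q) = if q = m then 1 else 0 := by
    intro m q hq
    by_cases hm : m = 0
    · subst hm
      simp [hL, hq]
    · have : e q = b ⟨q, hq⟩ := (hbe ⟨q, hq⟩).symm
      rw [this]
      simp only [hL, dif_neg hm, Module.Basis.coord_apply, Module.Basis.repr_self]
      rw [Finsupp.single_apply]
      simp [Subtype.ext_iff]
  have hLe0 : ∀ m : Fin n, L m (e 0) = if m = 0 then 0 else 1 := by
    intro m
    rw [h0, map_sum]
    have : ∀ q ∈ Finset.univ.erase (0 : Fin n), L m (e q) = if q = m then 1 else 0 :=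
      fun q hq => hLe m q (Finset.mem_erase.mp hq).1
    rw [Finset.sum_congr rfl this, Finset.sum_ite_eq']
    by_cases hm : m = 0 <;> simp [hm]
  -- choice of base point in each aₗ
  have hne : ∀ l, (a l).Nonempty := fun l => Finset.card_pos.mp (by rw [hcard]; exact hk)
  set σ : Fin j → Fin n := fun l => if (0 : Fin n) ∈ a l then 0 else (hne l).choose with hσ
  have hσmem : ∀ l, σ l ∈ a l := by
    intro l
    by_cases h : (0 : Fin n) ∈ a l
    · simp [hσ, h]
    · simpa [hσ, h] using (hne l).choose_spec
  have hσ0 : ∀ l i, i ∈ (a l).erase (σ l) → i ≠ 0 := by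
    intro l i hi h0'
    subst h0'
    obtain ⟨hne', hmem⟩ := Finset.mem_erase.mp hi
    by_cases h : (0 : Fin n) ∈ a l
    · exact hne' (by simp [hσ, h])
    · exact h hmem
  -- characterization of each subspace as an intersection of kernels
  have hW : ∀ l, Submodule.span F (e '' ↑(a l)ᶜ) =
      ⨅ i : {i : Fin n // i ∈ (a l).erase (σ l)}, LinearMap.ker (L i.1 - L (σ l)) := by
    intro l
    apply le_antisymm
    · rw [Submodule.span_le]
      rintro x ⟨m, hm, rfl⟩
      have hm' : m ∉ a l := by simpa using hm
      simp only [SetLike.mem_coe, Submodule.mem_iInf, LinearMap.mem_ker, LinearMap.sub_apply,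
        sub_eq_zero]
      rintro ⟨i, hi⟩
      have hia : i ∈ a l := (Finset.mem_erase.mp hi).2
      by_cases hm0 : m = 0
      · subst hm0
        have h1 : i ≠ 0 := fun h => hm' (h ▸ hia)
        have h2 : σ l ≠ 0 := fun h => hm' (h ▸ hσmem l)
        rw [hLe0, hLe0, if_neg h1, if_neg h2]
      · rw [hLe i m hm0, hLe (σ l) m hm0, if_neg (by rintro rfl; exact hm' hia),
          if_neg (by rintro rfl; exact hm' (hσmem l))]
    · intro v hv
      simp only [Submodule.mem_iInf, LinearMap.mem_ker, LinearMap.sub_apply, sub_eq_zero] at hv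
      have hva : ∀ i ∈ a l, L i v = L (σ l) v := by
        intro i hi
        by_cases h : i = σ l
        · rw [h]
        · exact hv ⟨i, Finset.mem_erase.mpr ⟨h, hi⟩⟩
      have hrepr : ∑ i : {i : Fin n // i ≠ 0}, b.repr v i • e i.1 = v := by
        conv_rhs => rw [← Module.Basis.sum_repr b v]
        exact Finset.sum_congr rfl fun i _ => by rw [hbe]
      by_cases h0l : (0 : Fin n) ∈ a l
      · have hσl : σ l = 0 := by simp [hσ, h0l]
        have ht : L (σ l) v = 0 := by simp [hσl, hL]
        rw [← hrepr]
        refine Submodule.sum_mem _ fun i _ => ?_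
        by_cases hia : i.1 ∈ a l
        · have : b.repr v i = 0 := by
            rw [← hLrepr, hva i.1 hia, ht]
          simp [this]
        · exact Submodule.smul_mem _ _ (Submodule.subset_span ⟨i.1, by simpa using hia, rfl⟩)
      · have he0 : e 0 ∈ Submodule.span F (e '' ↑(a l)ᶜ) :=
          Submodule.subset_span ⟨0, by simpa using h0l, rfl⟩
        have h0' : e 0 = ∑ i : {i : Fin n // i ≠ 0}, e i.1 := by
          rw [h0]
          exact Finset.sum_subtype _ (by simp) e
        have hexp : v = (∑ i : {i : Fin n // i ≠ 0}, (b.repr v i - L (σ l) v) • e i.1)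
            + (L (σ l) v) • e 0 := by
          conv_lhs => rw [← hrepr]
          rw [h0', Finset.smul_sum, ← Finset.sum_add_distrib]
          exact Finset.sum_congr rfl fun i _ => by rw [sub_smul, sub_add_cancel]
        rw [hexp]
        refine Submodule.add_mem _ (Submodule.sum_mem _ fun i _ => ?_)
          (Submodule.smul_mem _ _ he0)
        by_cases hia : i.1 ∈ a l
        · have : b.repr v i = L (σ l) v := by rw [← hLrepr]; exact hva i.1 hia
          simp [this]
        · exact Submodule.smul_mem _ _ (Submodule.subset_span ⟨i.1, by simpa using hia, rfl⟩)
  -- the combined constraint map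
  set Φ : V →ₗ[F] ((Σ l : Fin j, {i : Fin n // i ∈ (a l).erase (σ l)}) → F) :=
    LinearMap.pi (fun p => L p.2.1 - L (σ p.1)) with hΦ
  have hker : (⨅ i : Fin j, Submodule.span F (e '' ↑(a i)ᶜ)) = LinearMap.ker Φ := by
    rw [hΦ, LinearMap.ker_pi, iInf_sigma]
    exact iInf_congr fun l => by rw [hW l]
  -- surjectivity
  have hsurj : Function.Surjective Φ := by
    intro g
    refine ⟨∑ p : (Σ l : Fin j, {i : Fin n // i ∈ (a l).erase (σ l)}), g p • e p.2.1, ?_⟩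
    funext q
    obtain ⟨l, i⟩ := q
    have hv : ∀ m : Fin n,
        L m (∑ p : (Σ l : Fin j, {i : Fin n // i ∈ (a l).erase (σ l)}), g p • e p.2.1)
          = ∑ p : (Σ l : Fin j, {i : Fin n // i ∈ (a l).erase (σ l)}),
              g p * (if p.2.1 = m then 1 else 0) := by
      intro m
      rw [map_sum]
      exact Finset.sum_congr rfl fun p _ => by
        rw [map_smul, hLe m p.2.1 (hσ0 p.1 p.2.1 p.2.2), smul_eq_mul]
    have hi0 : i.1 ≠ 0 := hσ0 l i.1 i.2
    have hval1 :
        L i.1 (∑ p : (Σ l : Fin j, {i : Fin n // i ∈ (a l).erase (σ l)}), g p • e p.2.1)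
          = g ⟨l, i⟩ := by
      rw [hv]
      rw [Finset.sum_eq_single (⟨l, i⟩ : Σ l : Fin j, {i : Fin n // i ∈ (a l).erase (σ l)})]
      · simp
      · intro p _ hp
        suffices h : p.2.1 ≠ i.1 by simp [h]
        intro heq
        apply hp
        have hp1 : p.1 = l := by
          by_contra hne'
          exact Finset.disjoint_left.mp (hdisj _ _ hne')
            (Finset.mem_of_mem_erase p.2.2) (heq ▸ Finset.mem_of_mem_erase i.2)
        obtain ⟨l', i'⟩ := p
        subst hp1
        exact congrArg (Sigma.mk l') (Subtype.ext heq)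
      · intro h
        exact absurd (Finset.mem_univ _) h
    have hval2 :
        L (σ l) (∑ p : (Σ l : Fin j, {i : Fin n // i ∈ (a l).erase (σ l)}), g p • e p.2.1)
          = 0 := by
      by_cases hσl : σ l = 0
      · simp [hσl, hL]
      · rw [hv]
        refine Finset.sum_eq_zero fun p _ => ?_
        obtain ⟨l', i'⟩ := p
        suffices h : i'.1 ≠ σ l by simp [h]
        intro heq
        by_cases hp1 : l' = l
        · subst hp1
          exact (Finset.mem_erase.mp i'.2).1 heq
        · exact Finset.disjoint_left.mp (hdisj _ _ hp1)
            (Finset.mem_of_mem_erase i'.2) (by rw [heq]; exact hσmem l)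
    show L i.1 _ - L (σ l) _ = g ⟨l, i⟩
    rw [hval1, hval2, sub_zero]
  -- dimension count
  have hdimV : Module.finrank F V = n - 1 := by
    rw [Module.finrank_eq_card_basis b]
    simp [Fintype.card_subtype_compl]
  have hdimT : Module.finrank F
      ((Σ l : Fin j, {i : Fin n // i ∈ (a l).erase (σ l)}) → F) = j * (k - 1) := by
    rw [Module.finrank_pi, Fintype.card_sigma]
    have : ∀ l, Fintype.card {i : Fin n // i ∈ (a l).erase (σ l)} = k - 1 := by
      intro l
      rw [Fintype.card_coe, Finset.card_erase_of_mem (hσmem l), hcard]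
    rw [Finset.sum_congr rfl fun l _ => this l]
    simp [mul_comm]
  have hrn := LinearMap.finrank_range_add_finrank_ker Φ
  rw [LinearMap.range_eq_top.mpr hsurj, finrank_top, hdimT, hdimV] at hrn
  have h1 : n - 1 = (k * (s - j) + j * k) - 1 := by
    rw [hn, mul_comm j k, ← Nat.mul_add, Nat.sub_add_cancel hj]
  have h2 : j * (k - 1) + j = j * k := by
    cases k with
    | zero => omega
    | succ k' => simp [Nat.mul_succ]
  have hC : 1 ≤ j * k + k * (s - j) := by
    rcases Nat.lt_or_ge j s with h | h
    · have : 1 ≤ k * (s - j) := Nat.mul_pos hk (by omega)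
      omega
    · have hjs : j = s := le_antisymm hj h
      have : 1 ≤ j * k := Nat.mul_pos (by omega) hk
      omega
  have hjE : j ≤ j * k := Nat.le_mul_of_pos_right j hk
  rw [h1] at hrn
  rw [hker]
  have key : ∀ A B E D : ℕ, B + j = E → B + D = (A + E) - 1 → 1 ≤ E + A → j ≤ E →
      D = A + j - 1 := by
    intros; omega
  exact key (k * (s - j)) (j * (k - 1)) (j * k) _ h2 hrn hC hjE
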